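/- On the interval [−1/2, 1/2] ⊂ ℝ, let f(x) = x^n and φ(x) = x^n/log|x| (with φ(0) = 0). Then φ is of class C^n, the function ψ(x) = 1/log|x| (ψ(0)=0) is continuous and satisfies φ = ψ·f, but there is no Hölder continuous function ψ' on [−1/2,1/2] with φ = ψ'·f; indeed ψ is the unique continuous solution and ψ is not Hölder continuous at 0 for any exponent α > 0. -/

import Mathlib

open Set

open Filter Real Topology

noncomputable def hfun (j : ℕ) (x : ℝ) : ℝ := if x = 0 then 0 else (Real.log x)⁻¹ ^ j

lemma hfun_zero (j : ℕ) : hfun j 0 = 0 := by simp [hfun]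

lemma hfun_cont0 (j : ℕ) (hj : 1 ≤ j) : ContinuousAt (hfun j) 0 := by
  have hlog : Tendsto (fun x : ℝ => Real.log x) (𝓝[≠] (0:ℝ)) atBot :=
    Real.tendsto_log_nhdsNE_zero
  have hinv : Tendsto (fun x : ℝ => (Real.log x)⁻¹) (𝓝[≠] (0:ℝ)) (𝓝 0) := by
    have hneg : Tendsto (fun x : ℝ => -Real.log x) (𝓝[≠] (0:ℝ)) atTop :=
      tendsto_neg_atBot_atTop.comp hlog
    have := (tendsto_inv_atTop_zero.comp hneg).neg
    simpa [inv_neg] using this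
  have hpow : Tendsto (fun x : ℝ => (Real.log x)⁻¹ ^ j) (𝓝[≠] (0:ℝ)) (𝓝 0) := by
    have := hinv.pow j
    simpa [zero_pow (by omega : j ≠ 0)] using this
  have h1 : Tendsto (hfun j) (𝓝[≠] (0:ℝ)) (𝓝 0) := by
    refine hpow.congr' ?_
    filter_upwards [self_mem_nhdsWithin] with x hx
    simp only [hfun]; rw [if_neg (show x ≠ 0 from hx)]
  have h2 : Tendsto (hfun j) (pure (0:ℝ)) (𝓝 0) := by
    simpa [hfun_zero] using (tendsto_pure_nhds (hfun j) (0:ℝ))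
  have : Tendsto (hfun j) (𝓝[≠] (0:ℝ) ⊔ pure 0) (𝓝 0) := h1.sup h2
  rw [nhdsNE_sup_pure] at this
  simpa [ContinuousAt, hfun_zero] using this

lemma hasDerivAt_hfun {j : ℕ} (hj : 1 ≤ j) {x : ℝ} (hx : x ≠ 0) (hlx : Real.log x ≠ 0) :
    HasDerivAt (hfun j) (-(j:ℝ) * (Real.log x)⁻¹ ^ (j+1) / x) x := by
  obtain ⟨k, rfl⟩ : ∃ k, j = k + 1 := ⟨j - 1, by omega⟩
  have h : HasDerivAt (fun y : ℝ => (Real.log y)⁻¹ ^ (k+1))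
      ((↑(k+1) : ℝ) * (Real.log x)⁻¹ ^ k * (-(x⁻¹) / (Real.log x) ^ 2)) x := by
    exact (((Real.hasDerivAt_log hx).inv hlx).pow (k+1)).congr_deriv (by simp)
  have heq : hfun (k+1) =ᶠ[𝓝 x] fun y : ℝ => (Real.log y)⁻¹ ^ (k+1) := by
    filter_upwards [isOpen_compl_singleton.mem_nhds (by simpa using hx :
      x ∈ ({0}ᶜ : Set ℝ))] with y hy
    simp [hfun, (by simpa using hy : y ≠ 0)]
  have h2 := h.congr_of_eventuallyEq heq
  refine h2.congr_deriv ?_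
  rw [pow_add]
  field_simp
  rw [pow_succ]
  field_simp

lemma hasDerivAt_zero_hfun (m j : ℕ) (hj : 1 ≤ j) :
    HasDerivAt (fun x : ℝ => x ^ (m+1) * hfun j x) 0 0 := by
  rw [hasDerivAt_iff_tendsto_slope]
  have hc : ContinuousAt (fun x : ℝ => x ^ m * hfun j x) 0 :=
    (continuous_pow m).continuousAt (x := (0:ℝ)).mul (hfun_cont0 j hj)
  have hval : (fun x : ℝ => x ^ m * hfun j x) 0 = 0 := by simp [hfun_zero]
  have h0 : Tendsto (fun x : ℝ => x ^ m * hfun j x) (𝓝[≠] (0:ℝ)) (𝓝 0) :=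
    tendsto_nhdsWithin_of_tendsto_nhds (by simpa [hfun_zero] using hc.tendsto)
  refine h0.congr' ?_
  filter_upwards [self_mem_nhdsWithin] with x hx
  have hx' : x ≠ 0 := hx
  simp only [slope_def_field]
  rw [hfun_zero]
  field_simp [pow_succ]
  ring

lemma key : ∀ n j : ℕ, 1 ≤ j →
    ContDiffOn ℝ n (fun x : ℝ => x ^ n * hfun j x) (Ioo (-1:ℝ) 1) := by
  intro n
  induction n with
  | zero =>
      intro j hj
      rw [Nat.cast_zero, contDiffOn_zero]
      intro x hx
      by_cases hx0 : x = 0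
      · subst hx0
        exact (((continuous_pow 0).continuousAt (x := (0:ℝ))).mul (hfun_cont0 j hj)).continuousWithinAt
      · have hlx : Real.log x ≠ 0 := by
          rw [← Real.log_abs]
          refine ne_of_lt (Real.log_neg (abs_pos.mpr hx0) ?_)
          exact abs_lt.mpr ⟨hx.1, hx.2⟩
        refine (ContinuousAt.continuousWithinAt ?_)
        refine ContinuousAt.mul ((continuous_pow 0).continuousAt (x := x)) ?_
        have hformula : hfun j =ᶠ[𝓝 x] fun y : ℝ => (Real.log y)⁻¹ ^ j := by
          filter_upwards [isOpen_compl_singleton.mem_nhds (by simpa using hx0 :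
            x ∈ ({0}ᶜ : Set ℝ))] with y hy
          simp [hfun, (by simpa using hy : y ≠ 0)]
        refine ContinuousAt.congr ?_ hformula.symm
        exact (((Real.continuousAt_log hx0).inv₀ hlx).pow j)
  | succ m IH =>
      intro j hj
      have hderiv : ∀ x ∈ Ioo (-1:ℝ) 1,
          HasDerivAt (fun x : ℝ => x ^ (m+1) * hfun j x)
            ((↑(m+1) : ℝ) * (x ^ m * hfun j x) - (j:ℝ) * (x ^ m * hfun (j+1) x)) x := by
        intro x hx
        by_cases hx0 : x = 0
        · subst hx0
          simpa [hfun_zero] using hasDerivAt_zero_hfun m j hj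
        · have hlx : Real.log x ≠ 0 := by
            rw [← Real.log_abs]
            refine ne_of_lt (Real.log_neg (abs_pos.mpr hx0) ?_)
            exact abs_lt.mpr ⟨hx.1, hx.2⟩
          have h := (hasDerivAt_pow (m+1) x).mul (hasDerivAt_hfun hj hx0 hlx)
          refine h.congr_deriv ?_
          have hj1 : hfun j x = (Real.log x)⁻¹ ^ j := by simp [hfun, hx0]
          have hj2 : hfun (j+1) x = (Real.log x)⁻¹ ^ (j+1) := by simp [hfun, hx0]
          rw [hj1, hj2]
          push_cast
          field_simp
          ring
      have hsub : (↑(m+1) : WithTop ℕ∞) = (m : WithTop ℕ∞) + 1 := by push_cast; rfl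
      rw [hsub, contDiffOn_succ_iff_deriv_of_isOpen isOpen_Ioo]
      refine ⟨fun x hx => (hderiv x hx).differentiableAt.differentiableWithinAt, ?_, ?_⟩
      · intro h
        simp at h
      · have hG : ContDiffOn ℝ m
            (fun x : ℝ => (↑(m+1) : ℝ) * (x ^ m * hfun j x) - (j:ℝ) * (x ^ m * hfun (j+1) x))
            (Ioo (-1:ℝ) 1) :=
          (contDiffOn_const.mul (IH j hj)).sub (contDiffOn_const.mul (IH (j+1) (by omega)))
        refine hG.congr ?_
        intro x hx
        exact (hderiv x hx).deriv

/-- On `[-1/2, 1/2]`, with `f x = xⁿ` and `φ x = xⁿ / log |x|` (and `φ 0 = 0`):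
`φ` is `Cⁿ`, `ψ x = 1 / log |x|` (with `ψ 0 = 0`) is the unique continuous solution of
`φ = ψ · f`, `ψ` is not Hölder at `0` for any positive exponent, and there is no
Hölder continuous solution of `φ = ψ' · f` on `[-1/2, 1/2]`. -/
theorem statement15 (n : ℕ) (ψ φ : ℝ → ℝ)
    (hψdef : ∀ x : ℝ, ψ x = if x = 0 then 0 else 1 / Real.log |x|)
    (hφdef : ∀ x : ℝ, φ x = x ^ n * ψ x) :
    ContDiffOn ℝ n φ (Icc (-(1/2) : ℝ) (1/2)) ∧
    ContinuousOn ψ (Icc (-(1/2) : ℝ) (1/2)) ∧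
    (∀ x ∈ Icc (-(1/2) : ℝ) (1/2), φ x = ψ x * x ^ n) ∧
    (∀ ψ' : ℝ → ℝ, ContinuousOn ψ' (Icc (-(1/2) : ℝ) (1/2)) →
      (∀ x ∈ Icc (-(1/2) : ℝ) (1/2), φ x = ψ' x * x ^ n) →
      ∀ x ∈ Icc (-(1/2) : ℝ) (1/2), ψ' x = ψ x) ∧
    (∀ α : ℝ, 0 < α → ∀ C : ℝ, ¬ ∃ δ > (0 : ℝ), ∀ x : ℝ, |x| ≤ δ →
      |ψ x - ψ 0| ≤ C * |x| ^ α) ∧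
    (¬ ∃ (ψ' : ℝ → ℝ) (C α : NNReal), 0 < α ∧
        HolderOnWith C α ψ' (Icc (-(1/2) : ℝ) (1/2)) ∧
        ∀ x ∈ Icc (-(1/2) : ℝ) (1/2), φ x = ψ' x * x ^ n) := by
  have hψ : ∀ x : ℝ, ψ x = hfun 1 x := by
    intro x
    rw [hψdef]
    by_cases h : x = 0 <;> simp [hfun, h, Real.log_abs, one_div]
  have hsub : Icc (-(1/2) : ℝ) (1/2) ⊆ Ioo (-1:ℝ) 1 :=
    Icc_subset_Ioo (by norm_num) (by norm_num)
  have hφh : ∀ x : ℝ, φ x = x ^ n * hfun 1 x := fun x => by rw [hφdef, hψ]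
  have hψ0 : ψ 0 = 0 := by rw [hψdef]; simp
  have h0I : (0:ℝ) ∈ Icc (-(1/2):ℝ) (1/2) := by norm_num
  -- continuity of ψ
  have hcont : ContinuousOn ψ (Icc (-(1/2):ℝ) (1/2)) := by
    have h0 := key 0 1 le_rfl
    rw [Nat.cast_zero, contDiffOn_zero] at h0
    exact (h0.mono hsub).congr (fun x hx => by simp [hψ])
  -- part 1
  have part1 : ContDiffOn ℝ n φ (Icc (-(1/2):ℝ) (1/2)) :=
    ((key n 1 le_rfl).mono hsub).congr (fun x hx => hφh x)
  -- part 3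
  have part3 : ∀ x ∈ Icc (-(1/2):ℝ) (1/2), φ x = ψ x * x ^ n := by
    intro x hx; rw [hφdef]; ring
  -- part 4, uniqueness
  have part4 : ∀ ψ' : ℝ → ℝ, ContinuousOn ψ' (Icc (-(1/2) : ℝ) (1/2)) →
      (∀ x ∈ Icc (-(1/2) : ℝ) (1/2), φ x = ψ' x * x ^ n) →
      ∀ x ∈ Icc (-(1/2) : ℝ) (1/2), ψ' x = ψ x := by
    intro ψ' hc' heq x hx
    have key_ne : ∀ y ∈ Icc (-(1/2):ℝ) (1/2), y ≠ 0 → ψ' y = ψ y := by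
      intro y hy hy0
      have h1 := (heq y hy).symm.trans (part3 y hy)
      exact mul_right_cancel₀ (pow_ne_zero n hy0) h1
    by_cases hx0 : x = 0
    · subst hx0
      set s := Icc (-(1/2):ℝ) (1/2) \ {0} with hs
      have hsubset : Ioc (0:ℝ) (1/2) ⊆ s := by
        intro y hy
        exact ⟨⟨by linarith [hy.1], hy.2⟩, by simp [ne_of_gt hy.1]⟩
      have hNeBot : (𝓝[s] (0:ℝ)).NeBot := by
        have h1 : (0:ℝ) ∈ closure (Ioc (0:ℝ) (1/2)) := by
          rw [closure_Ioc (by norm_num : (0:ℝ) ≠ 1/2)]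
          norm_num
        have h2 := mem_closure_iff_nhdsWithin_neBot.mp h1
        exact h2.mono (nhdsWithin_mono _ hsubset)
      have ht' : Tendsto ψ' (𝓝[s] 0) (𝓝 (ψ' 0)) :=
        (hc' 0 h0I).mono_left (nhdsWithin_mono _ diff_subset)
      have htψ : Tendsto ψ (𝓝[s] 0) (𝓝 (ψ 0)) :=
        (hcont 0 h0I).mono_left (nhdsWithin_mono _ diff_subset)
      have ht'2 : Tendsto ψ' (𝓝[s] 0) (𝓝 (ψ 0)) := by
        refine htψ.congr' ?_
        filter_upwards [self_mem_nhdsWithin] with y hy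
        exact (key_ne y hy.1 (by simpa using hy.2)).symm
      exact tendsto_nhds_unique ht' ht'2
    · exact key_ne x hx hx0
  -- part 5
  have part5 : ∀ α : ℝ, 0 < α → ∀ C : ℝ, ¬ ∃ δ > (0 : ℝ), ∀ x : ℝ, |x| ≤ δ →
      |ψ x - ψ 0| ≤ C * |x| ^ α := by
    rintro α hα C ⟨δ, hδ, hH⟩
    have htend := tendsto_log_mul_rpow_nhdsGT_zero hα
    have hev : ∀ᶠ x in 𝓝[>] (0:ℝ), |Real.log x * x ^ α| < 1/(|C|+1) := by
      have hmem : Metric.ball (0:ℝ) (1/(|C|+1)) ∈ 𝓝 (0:ℝ) :=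
        Metric.ball_mem_nhds _ (by positivity)
      filter_upwards [htend hmem] with x hx
      have hx' : dist (Real.log x * x ^ α) 0 < 1/(|C|+1) := hx
      rwa [Real.dist_eq, sub_zero] at hx'
    have hev2 : Ioo (0:ℝ) (min δ (1/2)) ∈ 𝓝[>] (0:ℝ) :=
      Ioo_mem_nhdsGT_of_mem ⟨le_rfl, by positivity⟩
    obtain ⟨x, h1, h2⟩ := (hev.and (eventually_of_mem hev2 (fun y hy => hy))).exists
    have hx0 : 0 < x := h2.1
    have hxδ : x < δ := lt_of_lt_of_le h2.2 (min_le_left _ _)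
    have hx1 : x < 1 := lt_of_lt_of_le h2.2 (le_trans (min_le_right _ _) (by norm_num))
    have hlog : Real.log x < 0 := Real.log_neg hx0 hx1
    set L := -Real.log x with hL
    have hLpos : 0 < L := by simp [hL]; linarith
    set t := x ^ α with ht
    have htpos : 0 < t := Real.rpow_pos_of_pos hx0 α
    have habs : |Real.log x * t| = L * t := by
      rw [abs_mul, abs_of_neg hlog, abs_of_pos htpos]
    rw [habs] at h1
    have hψx : ψ x = -(L⁻¹) := by
      rw [hψdef, if_neg (ne_of_gt hx0), Real.log_abs, one_div, hL, inv_neg, neg_neg]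
    have hHx := hH x (by rw [abs_of_pos hx0]; linarith)
    rw [hψx, hψ0, sub_zero, abs_neg, abs_of_pos (show (0:ℝ) < L⁻¹ by positivity),
      abs_of_pos hx0] at hHx
    · -- contradiction: C * t < L⁻¹
      have hCt : C * t * L < 1 := by
        have e1 : C * t * L ≤ |C| * (L * t) := by
          have := mul_le_mul_of_nonneg_right (le_abs_self C) (le_of_lt (mul_pos hLpos htpos))
          nlinarith
        have e2 : |C| * (L * t) ≤ |C| * (1/(|C|+1)) :=
          mul_le_mul_of_nonneg_left (le_of_lt h1) (abs_nonneg C)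
        have e3 : |C| * (1/(|C|+1)) < 1 := by
          rw [mul_one_div, div_lt_one (by positivity)]
          linarith [abs_nonneg C]
        exact lt_of_le_of_lt (e1.trans e2) e3
      have hfin : C * t < L⁻¹ := by
        rw [← one_div, lt_div_iff₀ hLpos]
        exact hCt
      rw [← ht] at hHx
      linarith
  -- part 6
  have part6 : ¬ ∃ (ψ' : ℝ → ℝ) (C α : NNReal), 0 < α ∧
      HolderOnWith C α ψ' (Icc (-(1/2) : ℝ) (1/2)) ∧
      ∀ x ∈ Icc (-(1/2) : ℝ) (1/2), φ x = ψ' x * x ^ n := by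
    rintro ⟨ψ', C, α, hα, hHold, heq⟩
    have hc' : ContinuousOn ψ' (Icc (-(1/2):ℝ) (1/2)) := hHold.continuousOn hα
    have huniq := part4 ψ' hc' heq
    refine part5 (α:ℝ) (by exact_mod_cast hα) (C:ℝ) ⟨1/2, by norm_num, ?_⟩
    intro x hxd
    have hxI : x ∈ Icc (-(1/2):ℝ) (1/2) := by
      rcases abs_le.mp hxd with ⟨ha, hb⟩
      exact ⟨by linarith, hb⟩
    rw [← huniq x hxI, ← huniq 0 h0I]
    by_cases hx0 : x = 0
    · subst hx0
      simp [Real.zero_rpow (ne_of_gt (show (0:ℝ) < (α:ℝ) by exact_mod_cast hα))]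
    · have hd := hHold.edist_le hxI h0I
      rw [edist_dist, edist_dist] at hd
      have hdistpos : (0:ℝ) < dist x 0 := by
        rw [Real.dist_eq, sub_zero]
        exact abs_pos.mpr hx0
      rw [ENNReal.ofReal_rpow_of_pos hdistpos, ← ENNReal.ofReal_coe_nnreal,
        ← ENNReal.ofReal_mul C.coe_nonneg] at hd
      have := (ENNReal.ofReal_le_ofReal_iff (by positivity)).mp hd
      rw [Real.dist_eq, Real.dist_eq, sub_zero] at this
      exact this
  exact ⟨part1, hcont, part3, part4, part5, part6⟩
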